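/- Let (X_n, A_n)_{n∈ℕ} be measurable spaces and (κ_n : ∏_{i≤n} X_i ⇝ X_{n+1})_{n∈ℕ} Markov kernels. For all a ≤ b in ℕ, the composition of the trajectory kernel ξ_b with the partial-trajectory kernel η_{a,b} equals the trajectory kernel ξ_a: ξ_b ∘ η_{a,b} = ξ_a (as Markov kernels from ∏_{i≤a} X_i to ∏_{n∈ℕ} X_n). -/
import Mathlib


open MeasureTheory ProbabilityTheory Preorder Filter
open scoped ENNReal ProbabilityTheory Topology

variable {X : ℕ → Type*} [∀ n, MeasurableSpace (X n)]

/-- Canonical map gluing a trajectory up to time `b` with a point of `X (b + 1)` into a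
trajectory up to time `b + 1`. -/
def IicProdSucc (b : ℕ) (p : (Π i : Finset.Iic b, X i) × X (b + 1)) :
    Π i : Finset.Iic (b + 1), X i :=
  fun i ↦ if h : i.1 ≤ b then p.1 ⟨i.1, Finset.mem_Iic.2 h⟩
    else cast (congrArg X (Nat.le_antisymm (Finset.mem_Iic.1 i.2)
      (Nat.lt_of_not_le h))).symm p.2

/-- The partial trajectory kernel `η_{a,b}` built from the kernels `κ n`: for `b ≤ a` it is the
deterministic kernel given by the restriction map, and `η_{a,b+1}` is obtained from `η_{a,b}` by
composing with the product of the identity kernel and `κ b`. -/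
noncomputable def partialTraj (κ : ∀ n, Kernel (Π i : Finset.Iic n, X i) (X (n + 1))) (a : ℕ) :
    (b : ℕ) → Kernel (Π i : Finset.Iic a, X i) (Π i : Finset.Iic b, X i)
  | 0 => Kernel.deterministic (frestrictLe₂ (Nat.zero_le a)) (measurable_frestrictLe₂ _)
  | b + 1 =>
    if h : b + 1 ≤ a then Kernel.deterministic (frestrictLe₂ h) (measurable_frestrictLe₂ h)
    else ((Kernel.id ×ₖ κ b) ∘ₖ partialTraj κ a b).map (IicProdSucc b)

lemma measurable_IicProdSucc (b : ℕ) : Measurable (IicProdSucc (X := X) b) := by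
  refine measurable_pi_lambda _ fun i ↦ ?_
  obtain ⟨i, hi⟩ := i
  by_cases h : i ≤ b
  · simpa only [IicProdSucc, dif_pos h] using measurable_fst.eval
  · simp only [IicProdSucc, dif_neg h]
    have e : i = b + 1 := Nat.le_antisymm (Finset.mem_Iic.1 hi) (Nat.lt_of_not_le h)
    subst e
    simpa using measurable_snd

lemma kernel_map_map {α β γ δ : Type*} [MeasurableSpace α] [MeasurableSpace β]
    [MeasurableSpace γ] [MeasurableSpace δ] (κ : Kernel α β) {f : β → γ} {g : γ → δ}
    (hf : Measurable f) (hg : Measurable g) : (κ.map f).map g = κ.map (g ∘ f) := by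
  rw [← Kernel.deterministic_comp_eq_map hf, ← Kernel.deterministic_comp_eq_map hg,
    ← Kernel.deterministic_comp_eq_map (hg.comp hf), ← Kernel.comp_assoc,
    Kernel.deterministic_comp_deterministic]

lemma partialTraj_le (κ : ∀ n, Kernel (Π i : Finset.Iic n, X i) (X (n + 1))) {a c : ℕ}
    (h : c ≤ a) :
    partialTraj κ a c = Kernel.deterministic (frestrictLe₂ h) (measurable_frestrictLe₂ h) := by
  cases c with
  | zero => rfl
  | succ n => rw [partialTraj, dif_pos h]

lemma frestrictLe₂_comp_IicProdSucc {b c : ℕ} (h : c ≤ b) :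
    frestrictLe₂ (π := X) (h.trans b.le_succ) ∘ IicProdSucc b
      = frestrictLe₂ h ∘ Prod.fst := by
  funext p
  ext i
  have hib : i.1 ≤ b := le_trans (Finset.mem_Iic.1 i.2) h
  simp only [Function.comp_apply, frestrictLe₂_apply, IicProdSucc, dif_pos hib]

lemma partialTraj_map_frestrictLe₂ (κ : ∀ n, Kernel (Π i : Finset.Iic n, X i) (X (n + 1)))
    [∀ n, IsMarkovKernel (κ n)] (a : ℕ) {c b : ℕ} (h : c ≤ b) :
    (partialTraj κ a b).map (frestrictLe₂ h) = partialTraj κ a c := by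
  induction b with
  | zero =>
    have hc : c = 0 := Nat.le_zero.1 h
    subst hc
    have : frestrictLe₂ (π := X) h = id := rfl
    rw [this, Kernel.map_id]
  | succ b ih =>
    by_cases hc : c = b + 1
    · subst hc
      have : frestrictLe₂ (π := X) h = id := rfl
      rw [this, Kernel.map_id]
    · have hcb : c ≤ b := Nat.lt_succ_iff.1 (lt_of_le_of_ne h hc)
      rw [partialTraj]
      by_cases hba : b + 1 ≤ a
      · rw [dif_pos hba, ← Kernel.deterministic_comp_eq_map (measurable_frestrictLe₂ h),
          Kernel.deterministic_comp_deterministic, partialTraj_le κ (hcb.trans (Nat.le_of_succ_le hba))]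
        congr 1
      · rw [dif_neg hba,
          kernel_map_map _ (measurable_IicProdSucc b) (measurable_frestrictLe₂ h)]
        have hfr : frestrictLe₂ (π := X) h = frestrictLe₂ (hcb.trans b.le_succ) := rfl
        rw [hfr, frestrictLe₂_comp_IicProdSucc hcb,
          ← kernel_map_map _ measurable_fst (measurable_frestrictLe₂ hcb),
          ← Kernel.fst_eq, Kernel.fst_comp, Kernel.fst_prod, Kernel.id_comp, ih]

lemma partialTraj_comp_partialTraj (κ : ∀ n, Kernel (Π i : Finset.Iic n, X i) (X (n + 1)))
    [∀ n, IsMarkovKernel (κ n)] {a b : ℕ} (hab : a ≤ b) (c : ℕ) :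
    partialTraj κ b c ∘ₖ partialTraj κ a b = partialTraj κ a c := by
  induction c with
  | zero =>
    rw [partialTraj_le κ (Nat.zero_le b), Kernel.deterministic_comp_eq_map,
      partialTraj_map_frestrictLe₂ κ a (Nat.zero_le b)]
  | succ c ih =>
    by_cases h : c + 1 ≤ b
    · rw [partialTraj_le κ h, Kernel.deterministic_comp_eq_map,
        partialTraj_map_frestrictLe₂ κ a h]
    · rw [partialTraj, dif_neg h, Kernel.map_comp, Kernel.comp_assoc, ih,
        ← Kernel.map_comp]
      conv_rhs => rw [partialTraj]
      split_ifs with hca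
      · exact absurd (hca.trans hab) h
      · rfl

lemma measure_eq_of_frestrictLe {μ ν : Measure (Π n, X n)} [IsFiniteMeasure μ]
    [IsFiniteMeasure ν] (h : ∀ n, μ.map (frestrictLe n) = ν.map (frestrictLe n)) :
    μ = ν := by
  have hν : IsProjectiveLimit ν (fun J : Finset ℕ ↦ ν.map J.restrict) := fun J ↦ rfl
  have hμ : IsProjectiveLimit μ (fun J : Finset ℕ ↦ ν.map J.restrict) := by
    intro J
    have hJ : J ⊆ Finset.Iic (J.sup id) := fun j hj ↦
      Finset.mem_Iic.2 (Finset.le_sup (f := id) hj)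
    have hrestr : (J.restrict : (Π n, X n) → Π j : J, X j)
        = Finset.restrict₂ hJ ∘ frestrictLe (J.sup id) :=
      (Finset.restrict₂_comp_restrict hJ).symm
    rw [hrestr, ← Measure.map_map (Finset.measurable_restrict₂ hJ) (measurable_frestrictLe _),
      h (J.sup id), Measure.map_map (Finset.measurable_restrict₂ hJ) (measurable_frestrictLe _),
      ← hrestr]
  exact hμ.unique hν

/-- For `a ≤ b`, composing the trajectory kernel `ξ_b` with the partial trajectory kernel
`η_{a,b}` gives the trajectory kernel `ξ_a`. Here the trajectory kernels `ξ` are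
characterized by the fact that the pushforward of `ξ_a` under each restriction map `π_b` is
`η_{a,b}`. -/
theorem traj_comp_partialTraj (κ : ∀ n, Kernel (Π i : Finset.Iic n, X i) (X (n + 1)))
    [∀ n, IsMarkovKernel (κ n)]
    (ξ : ∀ n : ℕ, Kernel (Π i : Finset.Iic n, X i) (Π n, X n))
    (hξ : ∀ n, IsMarkovKernel (ξ n))
    (hchar : ∀ n b : ℕ, (ξ n).map (frestrictLe b) = partialTraj κ n b)
    {a b : ℕ} (hab : a ≤ b) :
    ξ b ∘ₖ partialTraj κ a b = ξ a := by
  have hb := hξ b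
  have ha := hξ a
  have hm : ∀ n, IsMarkovKernel (partialTraj (X := X) κ n b) := by
    intro n
    have : IsMarkovKernel ((ξ n).map (frestrictLe b)) :=
      Kernel.IsMarkovKernel.map _ (measurable_frestrictLe b)
    rwa [hchar n b] at this
  ext x s hs
  have hcomp : IsMarkovKernel (ξ b ∘ₖ partialTraj κ a b) := inferInstance
  suffices h : (ξ b ∘ₖ partialTraj κ a b) x = ξ a x by rw [h]
  refine measure_eq_of_frestrictLe fun n ↦ ?_
  have h1 : ((ξ b ∘ₖ partialTraj κ a b).map (frestrictLe n)) x
      = ((ξ a).map (frestrictLe n)) x := by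
    rw [Kernel.map_comp, hchar b n, partialTraj_comp_partialTraj κ hab n, hchar a n]
  rwa [Kernel.map_apply _ (measurable_frestrictLe n), Kernel.map_apply _ (measurable_frestrictLe n)]
    at h1
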